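/- Let z, z' be elements of the imaginary cone Z of a Coxeter group W. Then ⟨z, z'⟩ ≤ 0. -/

import Mathlib

open scoped BigOperators

/-- Nonnegative conical span of a subset of a real vector space. -/
def nnCone {V : Type*} [AddCommGroup V] [Module ℝ V] (Γ : Set V) : Set V :=
  { v | ∃ (s : Finset V) (c : V → ℝ), ↑s ⊆ Γ ∧ (∀ x ∈ s, 0 ≤ c x) ∧ v = ∑ x ∈ s, c x • x }

/-- A based root system for a Coxeter system, in a real quadratic space. -/
structure BasedRootSystem (V : Type*) [AddCommGroup V] [Module ℝ V] where
  form : V →ₗ[ℝ] V →ₗ[ℝ] ℝ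
  form_symm : ∀ u v, form u v = form v u
  simples : Set V
  posIndep : ∀ s : Finset V, ↑s ⊆ simples → ∀ c : V → ℝ,
      (∀ v ∈ s, 0 < c v) → ∑ v ∈ s, c v • v = 0 → s = ∅
  norm_one : ∀ α ∈ simples, form α α = 1
  pairing : ∀ α ∈ simples, ∀ β ∈ simples, α ≠ β →
      (∃ m : ℕ, 2 ≤ m ∧ form α β = -Real.cos (Real.pi / (m : ℝ))) ∨ form α β ≤ -1

namespace BasedRootSystem

variable {V : Type*} [AddCommGroup V] [Module ℝ V]

/-- `g` is the reflection in the vector `α` (so `g v = v - ⟨v, α^∨⟩ α` with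
`α^∨ = (2/⟨α,α⟩)α`). -/
def IsRefl (R : BasedRootSystem V) (α : V) (g : V ≃ₗ[ℝ] V) : Prop :=
  ∀ v, g v = v - ((2 / R.form α α) * R.form v α) • α

/-- The Coxeter group `W`, generated by the simple reflections. -/
def W (R : BasedRootSystem V) : Subgroup (V ≃ₗ[ℝ] V) :=
  Subgroup.closure { g | ∃ α ∈ R.simples, R.IsRefl α g }

/-- The reflection subgroup generated by reflections in the elements of `Δ`. -/
def subW (R : BasedRootSystem V) (Δ : Set V) : Subgroup (V ≃ₗ[ℝ] V) :=
  Subgroup.closure { g | ∃ α ∈ Δ, R.IsRefl α g }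

/-- The root system `Φ = WΠ`. -/
def roots (R : BasedRootSystem V) : Set V :=
  { β | ∃ w ∈ R.W, ∃ α ∈ R.simples, β = w α }

/-- The positive roots `Φ⁺ = Φ ∩ ℝ_{≥0}Π`. -/
def posRoots (R : BasedRootSystem V) : Set V := R.roots ∩ nnCone R.simples

/-- The fundamental chamber `𝒞`. -/
def chamber (R : BasedRootSystem V) : Set V := { v | ∀ α ∈ R.simples, 0 ≤ R.form v α }

/-- `𝒦 = ℝ_{≥0}Π ∩ (−𝒞)`. -/
def K (R : BasedRootSystem V) : Set V :=
  nnCone R.simples ∩ { v | ∀ α ∈ R.simples, R.form v α ≤ 0 }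

/-- The imaginary cone `𝒵 = ⋃_{w ∈ W} w(𝒦)`. -/
def imaginaryCone (R : BasedRootSystem V) : Set V :=
  { v | ∃ w ∈ R.W, ∃ k ∈ R.K, v = w k }

/-- The standard length function of `(W,S)`. -/
noncomputable def length (R : BasedRootSystem V) (w : V ≃ₗ[ℝ] V) : ℕ :=
  sInf { n | ∃ l : List (V ≃ₗ[ℝ] V), l.length = n ∧
      (∀ g ∈ l, ∃ α ∈ R.simples, R.IsRefl α g) ∧ w = l.prod }

/-- Irreducibility of the Coxeter system: the Coxeter graph on `Π` is connected. -/
def Irred (R : BasedRootSystem V) : Prop :=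
  ∀ A B : Set V, A ∪ B = R.simples → (∀ a ∈ A, ∀ b ∈ B, R.form a b = 0) →
    A = ∅ ∨ B = ∅

/-- `Δ` is a support of `v`: `v` is a strictly positive combination of `Δ ⊆ Π`. -/
def IsSupport (R : BasedRootSystem V) (Δ : Finset V) (v : V) : Prop :=
  ↑Δ ⊆ R.simples ∧ ∃ c : V → ℝ, (∀ x ∈ Δ, 0 < c x) ∧ v = ∑ x ∈ Δ, c x • x

/-- `Δ` is connected in the Coxeter graph. -/
def ConnSubset (R : BasedRootSystem V) (Δ : Finset V) : Prop :=
  ∀ x ∈ Δ, ∀ y ∈ Δ, Relation.ReflTransGen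
    (fun a b => a ∈ Δ ∧ b ∈ Δ ∧ R.form a b ≠ 0) x y

end BasedRootSystem


section Part1
variable {V : Type*} [AddCommGroup V] [Module ℝ V]

noncomputable def reflMap (B : V →ₗ[ℝ] V →ₗ[ℝ] ℝ) (α : V) : V →ₗ[ℝ] V where
  toFun v := v - (2 * B v α) • α
  map_add' u v := by simp only [map_add, LinearMap.add_apply]; module
  map_smul' c v := by simp only [map_smul, LinearMap.smul_apply, smul_eq_mul,
    RingHom.id_apply]; module

theorem reflMap_invol (B : V →ₗ[ℝ] V →ₗ[ℝ] ℝ) (α : V) (hα : B α α = 1) (v : V) :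
    reflMap B α (reflMap B α v) = v := by
  simp only [reflMap, LinearMap.coe_mk, AddHom.coe_mk, map_sub, LinearMap.sub_apply,
    map_smul, LinearMap.smul_apply, smul_eq_mul, hα]
  module

noncomputable def rrefl (B : V →ₗ[ℝ] V →ₗ[ℝ] ℝ) (α : V) (hα : B α α = 1) : V ≃ₗ[ℝ] V :=
  LinearEquiv.ofLinear (reflMap B α) (reflMap B α)
    (by ext v; exact reflMap_invol B α hα v) (by ext v; exact reflMap_invol B α hα v)

theorem rrefl_apply (B : V →ₗ[ℝ] V →ₗ[ℝ] ℝ) (α : V) (hα : B α α = 1) (v : V) :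
    rrefl B α hα v = v - (2 * B v α) • α := rfl

end Part1


noncomputable def useq (a : ℝ) : ℕ → ℝ
  | 0 => 0
  | 1 => 1
  | n+2 => 2*a*useq a (n+1) - useq a n

theorem useq_zero (a : ℝ) : useq a 0 = 0 := rfl
theorem useq_one (a : ℝ) : useq a 1 = 1 := rfl
theorem useq_succ_succ (a : ℝ) (n : ℕ) :
    useq a (n+2) = 2*a*useq a (n+1) - useq a n := rfl

theorem sin_rec (θ x : ℝ) :
    Real.sin (x + 2*θ) = 2 * Real.cos θ * Real.sin (x + θ) - Real.sin x := by
  have h1 : x + 2*θ = (x + θ) + θ := by ring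
  have h2 : x = (x + θ) - θ := by ring
  rw [h1, Real.sin_add, h2, Real.sin_sub]
  ring

theorem useq_closed {θ : ℝ} (hθ : Real.sin θ ≠ 0) (j : ℕ) :
    useq (Real.cos θ) j = Real.sin (j * θ) / Real.sin θ := by
  induction j using Nat.strong_induction_on with
  | _ j ih =>
    match j with
    | 0 => simp [useq_zero]
    | 1 => simp [useq_one, div_self hθ]
    | (n+2) =>
      rw [useq_succ_succ, ih (n+1) (by omega), ih n (by omega)]
      have : ((n:ℝ)+2) * θ = n * θ + 2*θ := by ring
      push_cast
      rw [this, sin_rec θ (n * θ)]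
      have : ((n:ℝ)+1) * θ = n * θ + θ := by ring
      rw [this]
      field_simp

theorem useq_ge_one_mono {a : ℝ} (ha : 1 ≤ a) : ∀ j, 0 ≤ useq a j ∧ useq a j ≤ useq a (j+1) := by
  intro j
  induction j with
  | zero => simp [useq_zero, useq_one]
  | succ n ih =>
    obtain ⟨h0, h1⟩ := ih
    have h2 : 0 ≤ useq a (n+1) := h0.trans h1
    constructor
    · exact h2
    · rw [useq_succ_succ]
      nlinarith

section Finite

theorem theta_pos {m : ℕ} (hm : 2 ≤ m) : 0 < Real.pi / m :=
  div_pos Real.pi_pos (by exact_mod_cast Nat.pos_of_ne_zero (by omega))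

theorem theta_le {m : ℕ} (hm : 2 ≤ m) : Real.pi / m ≤ Real.pi / 2 := by
  apply div_le_div_of_nonneg_left Real.pi_pos.le (by norm_num)
  exact_mod_cast hm

theorem sin_theta_pos {m : ℕ} (hm : 2 ≤ m) : 0 < Real.sin (Real.pi / m) := by
  apply Real.sin_pos_of_pos_of_lt_pi (theta_pos hm)
  calc Real.pi / m ≤ Real.pi / 2 := theta_le hm
    _ < Real.pi := by linarith [Real.pi_pos]

theorem cos_theta_nonneg {m : ℕ} (hm : 2 ≤ m) : 0 ≤ Real.cos (Real.pi / m) := by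
  apply Real.cos_nonneg_of_mem_Icc
  constructor
  · linarith [theta_pos hm, Real.pi_pos]
  · exact theta_le hm

theorem cos_theta_lt_one {m : ℕ} (hm : 2 ≤ m) : Real.cos (Real.pi / m) < 1 := by
  by_contra h
  push_neg at h
  have h2 := Real.cos_le_one (Real.pi / m)
  have h3 : Real.cos (Real.pi / m) = 1 := le_antisymm h2 h
  have h4 := Real.sin_sq_add_cos_sq (Real.pi / m)
  have h5 := sin_theta_pos hm
  nlinarith

theorem m_ne_zero {m : ℕ} (hm : 2 ≤ m) : (m : ℝ) ≠ 0 := by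
  have : (0:ℝ) < m := by exact_mod_cast Nat.pos_of_ne_zero (by omega)
  linarith

theorem useq_cos_nonneg {m : ℕ} (hm : 2 ≤ m) {j : ℕ} (hj : j ≤ m) :
    0 ≤ useq (Real.cos (Real.pi / m)) j := by
  rw [useq_closed (ne_of_gt (sin_theta_pos hm))]
  apply div_nonneg _ (sin_theta_pos hm).le
  apply Real.sin_nonneg_of_nonneg_of_le_pi
  · positivity
  · have hm0 := m_ne_zero hm
    have heq : (m:ℝ) * (Real.pi / m) = Real.pi := by field_simp
    have hle : (j:ℝ) * (Real.pi / m) ≤ (m:ℝ) * (Real.pi / m) := by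
      apply mul_le_mul_of_nonneg_right _ (theta_pos hm).le
      exact_mod_cast hj
    linarith

theorem useq_cos_m {m : ℕ} (hm : 2 ≤ m) : useq (Real.cos (Real.pi / m)) m = 0 := by
  rw [useq_closed (ne_of_gt (sin_theta_pos hm))]
  have hm0 := m_ne_zero hm
  have : (m : ℝ) * (Real.pi / m) = Real.pi := by field_simp
  rw [this, Real.sin_pi, zero_div]

theorem useq_cos_m_sub_one {m : ℕ} (hm : 2 ≤ m) :
    useq (Real.cos (Real.pi / m)) (m - 1) = 1 := by
  rw [useq_closed (ne_of_gt (sin_theta_pos hm))]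
  have h1 : ((m - 1 : ℕ) : ℝ) = (m : ℝ) - 1 := by
    have : (1:ℕ) ≤ m := by omega
    push_cast [this]; ring
  have h2 : ((m:ℝ) - 1) * (Real.pi / m) = Real.pi - Real.pi / m := by
    have hm0 := m_ne_zero hm
    field_simp
  rw [h1, h2, Real.sin_pi_sub, div_self (ne_of_gt (sin_theta_pos hm))]

theorem useq_cos_m_add_one {m : ℕ} (hm : 2 ≤ m) :
    useq (Real.cos (Real.pi / m)) (m + 1) = -1 := by
  have hsub : m - 1 + 2 = m + 1 := by omega
  have hmid : m - 1 + 1 = m := by omega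
  have h := useq_succ_succ (Real.cos (Real.pi / m)) (m - 1)
  rw [hsub, hmid, useq_cos_m hm, useq_cos_m_sub_one hm] at h
  rw [h]; ring

end Finite


namespace BasedRootSystem
variable {V : Type*} [AddCommGroup V] [Module ℝ V]

variable (R : BasedRootSystem V)

/-- the canonical simple reflection -/
noncomputable def sref (α : V) (hα : α ∈ R.simples) : V ≃ₗ[ℝ] V :=
  rrefl R.form α (R.norm_one α hα)

theorem sref_apply (α : V) (hα : α ∈ R.simples) (v : V) :
    R.sref α hα v = v - (2 * R.form v α) • α := rfl

theorem isRefl_sref (α : V) (hα : α ∈ R.simples) : R.IsRefl α (R.sref α hα) := by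
  intro v
  rw [sref_apply, R.norm_one α hα]
  norm_num

theorem isRefl_eq_sref {α : V} (hα : α ∈ R.simples) {g : V ≃ₗ[ℝ] V}
    (hg : R.IsRefl α g) : g = R.sref α hα := by
  apply LinearEquiv.toLinearMap_injective
  apply LinearMap.ext
  intro v
  have := hg v
  simp only [R.norm_one α hα] at this
  simp only [LinearEquiv.coe_coe, this, sref_apply]
  norm_num

theorem sref_mul_self (α : V) (hα : α ∈ R.simples) :
    R.sref α hα * R.sref α hα = 1 := by
  apply LinearEquiv.toLinearMap_injective
  apply LinearMap.ext
  intro v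
  exact reflMap_invol R.form α (R.norm_one α hα) v

theorem sref_mem (Δ : Set V) {α : V} (hαΔ : α ∈ Δ) (hα : α ∈ R.simples) :
    R.sref α hα ∈ R.subW Δ :=
  Subgroup.subset_closure ⟨α, hαΔ, R.isRefl_sref α hα⟩

/-- a word in the reflections of Δ -/
def IsWord (Δ : Set V) (l : List (V ≃ₗ[ℝ] V)) : Prop := ∀ g ∈ l, ∃ γ ∈ Δ, R.IsRefl γ g

theorem isWord_nil (Δ : Set V) : R.IsWord Δ ([] : List (V ≃ₗ[ℝ] V)) := by
  intro g hg; simp at hg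

theorem letter_mul_self {Δ : Set V} (hΔ : Δ ⊆ R.simples) {g : V ≃ₗ[ℝ] V}
    (hg : ∃ γ ∈ Δ, R.IsRefl γ g) : g * g = 1 := by
  obtain ⟨γ, hγ, hgγ⟩ := hg
  rw [R.isRefl_eq_sref (hΔ hγ) hgγ]
  exact R.sref_mul_self γ (hΔ hγ)

theorem word_prod_inv {Δ : Set V} (hΔ : Δ ⊆ R.simples) {l : List (V ≃ₗ[ℝ] V)}
    (hl : R.IsWord Δ l) : (l.prod)⁻¹ = l.reverse.prod := by
  induction l with
  | nil => simp
  | cons a t ih =>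
    have ha : a⁻¹ = a := inv_eq_of_mul_eq_one_right (R.letter_mul_self hΔ (hl a (by simp)))
    have ht : R.IsWord Δ t := fun g hg => hl g (by simp [hg])
    simp [List.prod_cons, mul_inv_rev, ih ht, ha]

theorem exists_word_of_mem {Δ : Set V} (hΔ : Δ ⊆ R.simples) {w : V ≃ₗ[ℝ] V}
    (hw : w ∈ R.subW Δ) : ∃ l, R.IsWord Δ l ∧ w = l.prod := by
  refine Subgroup.closure_induction ?_ ?_ ?_ ?_ hw
  · intro g hg
    refine ⟨[g], fun g' hg' => ?_, by simp⟩
    simp only [List.mem_singleton] at hg'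
    subst hg'; exact hg
  · exact ⟨[], R.isWord_nil Δ, by simp⟩
  · rintro x y hx hy ⟨lx, hlx, rfl⟩ ⟨ly, hly, rfl⟩
    exact ⟨lx ++ ly, fun g hg => by
      rcases List.mem_append.mp hg with h | h
      exacts [hlx g h, hly g h], by simp⟩
  · rintro x hx ⟨l, hl, rfl⟩
    exact ⟨l.reverse, fun g hg => hl g (List.mem_reverse.mp hg), R.word_prod_inv hΔ hl⟩

/-- length with respect to reflections of Δ -/
noncomputable def len (Δ : Set V) (w : V ≃ₗ[ℝ] V) : ℕ :=
  sInf { n | ∃ l : List (V ≃ₗ[ℝ] V), l.length = n ∧ R.IsWord Δ l ∧ w = l.prod }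

theorem len_le {Δ : Set V} {w : V ≃ₗ[ℝ] V} {l : List (V ≃ₗ[ℝ] V)}
    (hl : R.IsWord Δ l) (hwl : w = l.prod) : R.len Δ w ≤ l.length :=
  Nat.sInf_le ⟨l, rfl, hl, hwl⟩

theorem exists_min_word {Δ : Set V} (hΔ : Δ ⊆ R.simples) {w : V ≃ₗ[ℝ] V}
    (hw : w ∈ R.subW Δ) :
    ∃ l : List (V ≃ₗ[ℝ] V), l.length = R.len Δ w ∧ R.IsWord Δ l ∧ w = l.prod := by
  have hne : { n | ∃ l : List (V ≃ₗ[ℝ] V), l.length = n ∧ R.IsWord Δ l ∧ w = l.prod }.Nonempty := by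
    obtain ⟨l, hl, hwl⟩ := R.exists_word_of_mem hΔ hw
    exact ⟨l.length, l, rfl, hl, hwl⟩
  exact Nat.sInf_mem hne

theorem len_one (Δ : Set V) : R.len Δ 1 = 0 :=
  Nat.le_zero.mp (R.len_le (R.isWord_nil Δ) (by simp))

theorem eq_one_of_len_zero {Δ : Set V} (hΔ : Δ ⊆ R.simples) {w : V ≃ₗ[ℝ] V}
    (hw : w ∈ R.subW Δ) (h : R.len Δ w = 0) : w = 1 := by
  obtain ⟨l, hlen, _, hwl⟩ := R.exists_min_word hΔ hw
  rw [h] at hlen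
  rw [hwl, List.length_eq_zero_iff.mp hlen, List.prod_nil]

theorem len_mul_word_le {Δ : Set V} (hΔ : Δ ⊆ R.simples) {w : V ≃ₗ[ℝ] V}
    (hw : w ∈ R.subW Δ) {l : List (V ≃ₗ[ℝ] V)} (hl : R.IsWord Δ l) :
    R.len Δ (w * l.prod) ≤ R.len Δ w + l.length := by
  obtain ⟨lw, hlen, hlw, rfl⟩ := R.exists_min_word hΔ hw
  have : lw.prod * l.prod = (lw ++ l).prod := (List.prod_append).symm
  calc R.len Δ (lw.prod * l.prod) ≤ (lw ++ l).length :=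
        R.len_le (fun g hg => by
          rcases List.mem_append.mp hg with h | h
          exacts [hlw g h, hl g h]) this
    _ = R.len Δ lw.prod + l.length := by rw [List.length_append, hlen]

theorem subW_mono {Δ' Δ : Set V} (h : Δ' ⊆ Δ) : R.subW Δ' ≤ R.subW Δ :=
  Subgroup.closure_mono (fun g hg => by obtain ⟨γ, hγ, hgγ⟩ := hg; exact ⟨γ, h hγ, hgγ⟩)

theorem len_mul_le {Δ' Δ : Set V} (hΔ : Δ ⊆ R.simples) (hΔ' : Δ' ⊆ Δ)
    {w v : V ≃ₗ[ℝ] V} (hw : w ∈ R.subW Δ) (hv : v ∈ R.subW Δ') :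
    R.len Δ (w * v) ≤ R.len Δ w + R.len Δ' v := by
  obtain ⟨lv, hlen, hlv, rfl⟩ := R.exists_min_word (hΔ'.trans hΔ) hv
  rw [← hlen]
  exact R.len_mul_word_le hΔ hw (fun g hg => by
    obtain ⟨γ, hγ, h⟩ := hlv g hg; exact ⟨γ, hΔ' hγ, h⟩)

theorem len_mul_sref_le {Δ : Set V} (hΔ : Δ ⊆ R.simples) {w : V ≃ₗ[ℝ] V}
    (hw : w ∈ R.subW Δ) {α : V} (hαΔ : α ∈ Δ) :
    R.len Δ (w * R.sref α (hΔ hαΔ)) ≤ R.len Δ w + 1 := by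
  have := R.len_mul_word_le hΔ hw (l := [R.sref α (hΔ hαΔ)])
    (fun g hg => by simp at hg; exact hg ▸ ⟨α, hαΔ, R.isRefl_sref α (hΔ hαΔ)⟩)
  simpa using this

theorem len_le_len_mul_sref {Δ : Set V} (hΔ : Δ ⊆ R.simples) {w : V ≃ₗ[ℝ] V}
    (hw : w ∈ R.subW Δ) {α : V} (hαΔ : α ∈ Δ) :
    R.len Δ w ≤ R.len Δ (w * R.sref α (hΔ hαΔ)) + 1 := by
  have h2 : w * R.sref α (hΔ hαΔ) ∈ R.subW Δ :=
    mul_mem hw (R.sref_mem Δ hαΔ (hΔ hαΔ))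
  have := R.len_mul_sref_le hΔ h2 hαΔ
  rwa [mul_assoc, R.sref_mul_self α (hΔ hαΔ), mul_one] at this

theorem exists_last_letter {Δ : Set V} (hΔ : Δ ⊆ R.simples) {w : V ≃ₗ[ℝ] V}
    (hw : w ∈ R.subW Δ) {n : ℕ} (h : R.len Δ w = n + 1) :
    ∃ α, ∃ hαΔ : α ∈ Δ, R.len Δ (w * R.sref α (hΔ hαΔ)) = n := by
  obtain ⟨l, hlen, hl, hwl⟩ := R.exists_min_word hΔ hw
  have hlne : l ≠ [] := by rintro rfl; simp [h] at hlen
  obtain ⟨l', g, rfl⟩ : ∃ l' g, l = l' ++ [g] := ⟨l.dropLast, l.getLast hlne,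
    (List.dropLast_append_getLast hlne).symm⟩
  have hg : ∃ γ ∈ Δ, R.IsRefl γ g := hl g (by simp)
  obtain ⟨γ, hγΔ, hgγ⟩ := hg
  have hgs : g = R.sref γ (hΔ hγΔ) := R.isRefl_eq_sref (hΔ hγΔ) hgγ
  refine ⟨γ, hγΔ, le_antisymm ?_ ?_⟩
  · have hwp : w * R.sref γ (hΔ hγΔ) = l'.prod := by
      rw [hwl, List.prod_append, List.prod_singleton, hgs, mul_assoc,
        R.sref_mul_self γ (hΔ hγΔ), mul_one]
    have : R.len Δ (w * R.sref γ (hΔ hγΔ)) ≤ l'.length :=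
      R.len_le (fun g' hg' => hl g' (by simp [hg'])) hwp
    have hll : l'.length = n := by
      have := hlen; simp [h] at this; omega
    omega
  · have := R.len_le_len_mul_sref hΔ hw hγΔ
    omega


/-! ### Dihedral machinery -/

def altList (sa sb : V ≃ₗ[ℝ] V) : ℕ → List (V ≃ₗ[ℝ] V)
  | 0 => []
  | j+1 => (if Odd (j+1) then sb else sa) :: altList sa sb j

theorem altList_length (sa sb : V ≃ₗ[ℝ] V) (j : ℕ) : (altList sa sb j).length = j := by
  induction j with
  | zero => rfl
  | succ n ih => simp [altList, ih]

theorem altList_prod_succ (sa sb : V ≃ₗ[ℝ] V) (j : ℕ) :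
    (altList sa sb (j+1)).prod = (if Odd (j+1) then sb else sa) * (altList sa sb j).prod := by
  rw [show altList sa sb (j+1) = (if Odd (j+1) then sb else sa) :: altList sa sb j from rfl,
    List.prod_cons]

theorem word_prod_mem (R : BasedRootSystem V) {Δ : Set V} {l : List (V ≃ₗ[ℝ] V)}
    (hl : R.IsWord Δ l) : l.prod ∈ R.subW Δ := by
  induction l with
  | nil => rw [List.prod_nil]; exact one_mem _
  | cons g t ih =>
    rw [List.prod_cons]
    exact mul_mem (Subgroup.subset_closure (hl g (by simp)))
      (ih fun x hx => hl x (by simp [hx]))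

theorem isWord_altList (R : BasedRootSystem V) {α β : V} (hα : α ∈ R.simples)
    (hβ : β ∈ R.simples) (j : ℕ) :
    R.IsWord {α, β} (altList (R.sref α hα) (R.sref β hβ) j) := by
  induction j with
  | zero => exact R.isWord_nil _
  | succ n ih =>
    intro g hg
    rw [show altList (R.sref α hα) (R.sref β hβ) (n+1)
      = (if Odd (n+1) then R.sref β hβ else R.sref α hα)
        :: altList (R.sref α hα) (R.sref β hβ) n from rfl] at hg
    rcases List.mem_cons.mp hg with h | h
    · subst h
      by_cases ho : Odd (n+1)
      · simp only [if_pos ho]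
        exact ⟨β, by simp, R.isRefl_sref β hβ⟩
      · simp only [if_neg ho]
        exact ⟨α, by simp, R.isRefl_sref α hα⟩
    · exact ih g h

theorem sref_combo_left (R : BasedRootSystem V) {α β : V} (hα : α ∈ R.simples) (a x y : ℝ)
    (h2 : R.form β α = -a) :
    R.sref α hα (x•α + y•β) = (2*a*y - x)•α + y•β := by
  rw [sref_apply]
  have h : R.form (x•α + y•β) α = x * 1 + y * (-a) := by
    rw [map_add, map_smul, map_smul]
    simp [R.norm_one α hα, h2]
  rw [h]
  module

theorem sref_combo_right (R : BasedRootSystem V) {α β : V} (hβ : β ∈ R.simples) (a x y : ℝ)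
    (h1 : R.form α β = -a) :
    R.sref β hβ (x•α + y•β) = x•α + (2*a*x - y)•β := by
  rw [sref_apply]
  have h : R.form (x•α + y•β) β = x * (-a) + y * 1 := by
    rw [map_add, map_smul, map_smul]
    simp [R.norm_one β hβ, h1]
  rw [h]
  module

theorem tau_alpha (R : BasedRootSystem V) {α β : V} (hα : α ∈ R.simples) (hβ : β ∈ R.simples)
    (a : ℝ) (h1 : R.form α β = -a) (h2 : R.form β α = -a) : ∀ j : ℕ,
    (altList (R.sref α hα) (R.sref β hβ) j).prod α
      = (if Even j then useq a (j+1) else useq a j) • α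
        + (if Even j then useq a j else useq a (j+1)) • β := by
  intro j
  induction j with
  | zero => simp [altList, useq_zero, useq_one]
  | succ n ih =>
    have hmul : ((if Odd (n+1) then R.sref β hβ else R.sref α hα)
        * (altList (R.sref α hα) (R.sref β hβ) n).prod) α
        = (if Odd (n+1) then R.sref β hβ else R.sref α hα)
          ((altList (R.sref α hα) (R.sref β hβ) n).prod α) := rfl
    rw [altList_prod_succ, hmul, ih]
    rcases Nat.even_or_odd n with he | ho
    · have hne : ¬ Even (n+1) := by simp [Nat.even_add_one, he]
      have hodd : Odd (n+1) := Nat.not_even_iff_odd.mp hne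
      simp only [if_pos he, if_pos hodd, if_neg hne]
      rw [sref_combo_right R hβ a _ _ h1, useq_succ_succ]
    · have hev : Even (n+1) := Nat.even_add_one.mpr (Nat.not_even_iff_odd.mpr ho)
      have hnotodd : ¬ Odd (n+1) := by
        rw [← Nat.not_even_iff_odd]; exact not_not_intro hev
      have hne : ¬ Even n := Nat.not_even_iff_odd.mpr ho
      simp only [if_neg hne, if_pos hev, if_neg hnotodd]
      rw [sref_combo_left R hα a _ _ h2, useq_succ_succ]

theorem tau_beta (R : BasedRootSystem V) {α β : V} (hα : α ∈ R.simples) (hβ : β ∈ R.simples)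
    (a : ℝ) (h1 : R.form α β = -a) (h2 : R.form β α = -a) : ∀ j : ℕ, 1 ≤ j →
    (altList (R.sref α hα) (R.sref β hβ) j).prod β
      = (-(if Even j then useq a j else useq a (j-1))) • α
        + (-(if Even j then useq a (j-1) else useq a j)) • β := by
  intro j hj
  induction j, hj using Nat.le_induction with
  | base =>
    have h0 : altList (R.sref α hα) (R.sref β hβ) 1 = [R.sref β hβ] := by
      simp [altList]
    rw [h0, List.prod_singleton, sref_apply, R.norm_one β hβ]
    have hne : ¬ Even 1 := by decide
    simp only [if_neg hne]
    simp only [useq_zero, useq_one, Nat.sub_self]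
    module
  | succ n hn ih =>
    have hmul : ((if Odd (n+1) then R.sref β hβ else R.sref α hα)
        * (altList (R.sref α hα) (R.sref β hβ) n).prod) β
        = (if Odd (n+1) then R.sref β hβ else R.sref α hα)
          ((altList (R.sref α hα) (R.sref β hβ) n).prod β) := rfl
    rw [altList_prod_succ, hmul, ih]
    have e1 : n - 1 + 2 = n + 1 := by omega
    have e2 : n - 1 + 1 = n := by omega
    have hu := useq_succ_succ a (n-1)
    rw [e1, e2] at hu
    have e3 : n + 1 - 1 = n := by omega
    rcases Nat.even_or_odd n with he | ho
    · have hne : ¬ Even (n+1) := by simp [Nat.even_add_one, he]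
      have hodd : Odd (n+1) := Nat.not_even_iff_odd.mp hne
      simp only [if_pos he, if_pos hodd, if_neg hne, e3]
      rw [sref_combo_right R hβ a _ _ h1, hu]
      module
    · have hev : Even (n+1) := Nat.even_add_one.mpr (Nat.not_even_iff_odd.mpr ho)
      have hnotodd : ¬ Odd (n+1) := by
        rw [← Nat.not_even_iff_odd]; exact not_not_intro hev
      have hne : ¬ Even n := Nat.not_even_iff_odd.mpr ho
      simp only [if_neg hne, if_pos hev, if_neg hnotodd, e3]
      rw [sref_combo_left R hα a _ _ h2, hu]
      module


theorem word_fixes (R : BasedRootSystem V) {α β : V} (hα : α ∈ R.simples) (hβ : β ∈ R.simples)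
    {l : List (V ≃ₗ[ℝ] V)} (hl : R.IsWord {α, β} l) :
    ∀ n : V, R.form n α = 0 → R.form n β = 0 → l.prod n = n := by
  induction l with
  | nil => intro n _ _; rfl
  | cons g t ih =>
    intro n h1 h2
    have hg : (g * t.prod) n = g (t.prod n) := rfl
    rw [List.prod_cons, hg, ih (fun x hx => hl x (by simp [hx])) n h1 h2]
    obtain ⟨γ, hγ, hrefl⟩ := hl g (by simp)
    have hγs : γ ∈ R.simples := by
      rcases hγ with h | h
      · exact h ▸ hα
      · simp at h; exact h ▸ hβ
    rw [R.isRefl_eq_sref hγs hrefl, sref_apply]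
    rcases hγ with h | h
    · subst h; rw [h1]; simp
    · simp at h; subst h; rw [h2]; simp

theorem decomp (R : BasedRootSystem V) {α β : V} (hα : α ∈ R.simples) (hβ : β ∈ R.simples)
    (hc2 : R.form α β * R.form α β ≠ 1) (v : V) :
    ∃ p q : ℝ, ∃ n : V, v = p•α + q•β + n ∧ R.form n α = 0 ∧ R.form n β = 0 := by
  have hone : (1:ℝ) - R.form α β * R.form α β ≠ 0 := sub_ne_zero.mpr (Ne.symm hc2)
  have hone2 : (1:ℝ) - R.form α β ^ 2 ≠ 0 := by rw [sq]; exact hone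
  set c := R.form α β with hc
  set A := R.form v α with hA
  set B := R.form v β with hB
  refine ⟨(A - c*B)/(1 - c*c), (B - c*A)/(1 - c*c),
    v - ((A - c*B)/(1 - c*c))•α - ((B - c*A)/(1 - c*c))•β, by module, ?_, ?_⟩
  · simp only [map_sub, map_smul, LinearMap.sub_apply, LinearMap.smul_apply, smul_eq_mul]
    rw [R.norm_one α hα, show R.form β α = c from (R.form_symm β α).trans hc.symm, ← hA]
    field_simp
    ring
  · simp only [map_sub, map_smul, LinearMap.sub_apply, LinearMap.smul_apply, smul_eq_mul]
    rw [R.norm_one β hβ, show R.form α β = c from hc.symm, ← hB]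
    field_simp
    ring

theorem equiv_ext (R : BasedRootSystem V) {α β : V} (hα : α ∈ R.simples) (hβ : β ∈ R.simples)
    (hc2 : R.form α β * R.form α β ≠ 1) {F G : V ≃ₗ[ℝ] V}
    (hFα : F α = G α) (hFβ : F β = G β)
    (hF : ∀ n, R.form n α = 0 → R.form n β = 0 → F n = n)
    (hG : ∀ n, R.form n α = 0 → R.form n β = 0 → G n = n) : F = G := by
  apply LinearEquiv.toLinearMap_injective
  apply LinearMap.ext
  intro v
  obtain ⟨p, q, n, rfl, h1, h2⟩ := decomp R hα hβ hc2 v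
  simp only [LinearEquiv.coe_coe, map_add, map_smul]
  rw [hFα, hFβ, hF n h1 h2, hG n h1 h2]

theorem alt_relation (R : BasedRootSystem V) {α β : V} (hα : α ∈ R.simples)
    (hβ : β ∈ R.simples) {m : ℕ} (hm : 2 ≤ m)
    (hform : R.form α β = -Real.cos (Real.pi/m)) :
    (altList (R.sref α hα) (R.sref β hβ) m).prod
      = (altList (R.sref β hβ) (R.sref α hα) m).prod := by
  set a := Real.cos (Real.pi/m) with ha
  have hba : R.form β α = -a := (R.form_symm β α).trans hform
  have ha0 : 0 ≤ a := cos_theta_nonneg hm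
  have ha1 : a < 1 := cos_theta_lt_one hm
  have hc2 : R.form α β * R.form α β ≠ 1 := by
    rw [hform]
    nlinarith
  have hm1 : 1 ≤ m := by omega
  have hum : useq a m = 0 := useq_cos_m hm
  have hum1 : useq a (m-1) = 1 := useq_cos_m_sub_one hm
  have hump : useq a (m+1) = -1 := useq_cos_m_add_one hm
  apply equiv_ext R hα hβ hc2
  · rw [tau_alpha R hα hβ a hform hba m, tau_beta R hβ hα a hba hform m hm1]
    rcases Nat.even_or_odd m with he | ho
    · simp only [if_pos he, hum, hum1, hump]
      module
    · have hne : ¬ Even m := Nat.not_even_iff_odd.mpr ho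
      simp only [if_neg hne, hum, hum1, hump]
      module
  · rw [tau_beta R hα hβ a hform hba m hm1, tau_alpha R hβ hα a hba hform m]
    rcases Nat.even_or_odd m with he | ho
    · simp only [if_pos he, hum, hum1, hump]
      module
    · have hne : ¬ Even m := Nat.not_even_iff_odd.mpr ho
      simp only [if_neg hne, hum, hum1, hump]
      module
  · intro n h1 h2
    exact word_fixes R hα hβ (isWord_altList R hα hβ m) n h1 h2
  · intro n h1 h2
    exact word_fixes R hβ hα (isWord_altList R hβ hα m) n h2 h1

theorem altList_prod_last (sa sb : V ≃ₗ[ℝ] V) : ∀ j : ℕ, ∃ l : List (V ≃ₗ[ℝ] V),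
    l.length = j ∧ (∀ g ∈ l, g = sa ∨ g = sb) ∧ altList sa sb (j+1) = l ++ [sb] := by
  intro j
  induction j with
  | zero =>
    refine ⟨[], rfl, by simp, ?_⟩
    simp [altList]
  | succ n ih =>
    obtain ⟨l, hlen, hmem, heq⟩ := ih
    refine ⟨(if Odd (n+2) then sb else sa) :: l, by simp [hlen], ?_, ?_⟩
    · intro g hg
      rcases List.mem_cons.mp hg with h | h
      · subst h
        by_cases ho : Odd (n+2) <;> simp [ho]
      · exact hmem g h
    · rw [show altList sa sb (n+2) = (if Odd (n+2) then sb else sa) :: altList sa sb (n+1) from rfl,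
        heq]
      rfl

theorem dihedralP (R : BasedRootSystem V) : ∀ M : ℕ, ∀ α β : V,
    ∀ (hα : α ∈ R.simples) (hβ : β ∈ R.simples), α ≠ β →
    ∀ (v : V ≃ₗ[ℝ] V) (j : ℕ), v ∈ R.subW {α, β} →
    2 * R.len {α, β} v + min j 1 = M →
    (1 ≤ j → R.len {α, β} v < R.len {α, β}
        (v * (if Odd j then R.sref β hβ else R.sref α hα))) →
    R.len {α, β} (v * (altList (R.sref α hα) (R.sref β hβ) j).prod) = R.len {α, β} v + j →
    R.len {α, β} (v * (altList (R.sref α hα) (R.sref β hβ) j).prod)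
      ≤ R.len {α, β} (v * (altList (R.sref α hα) (R.sref β hβ) j).prod * R.sref α hα) →
    (∀ m : ℕ, 2 ≤ m → R.form α β = -Real.cos (Real.pi / m) → j ≤ m) →
    ∃ p q : ℝ, 0 ≤ p ∧ 0 ≤ q ∧
      (v * (altList (R.sref α hα) (R.sref β hβ) j).prod) α = p • α + q • β := by
  intro M
  induction M using Nat.strong_induction_on with
  | _ M IH =>
  intro α β hα hβ hab v j hv hM hinv hlen hstop hbound
  have hΔ : ({α, β} : Set V) ⊆ R.simples := by
    intro x hx
    rcases hx with h | h
    · exact h ▸ hα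
    · simp only [Set.mem_singleton_iff] at h; exact h ▸ hβ
  have hαΔ : α ∈ ({α, β} : Set V) := by simp
  have hβΔ : β ∈ ({α, β} : Set V) := by simp
  set sα := R.sref α hα with hsα
  set sβ := R.sref β hβ with hsβ
  -- j cannot equal a finite order m
  have hnem : ∀ m : ℕ, 2 ≤ m → R.form α β = -Real.cos (Real.pi / m) → j ≠ m := by
    intro m hm2 hform hjm
    subst hjm
    have hrel := alt_relation R hα hβ hm2 hform
    obtain ⟨l, hlen', hmem', heq'⟩ := altList_prod_last (R.sref β hβ) (R.sref α hα) (j-1)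
    have hj1 : j - 1 + 1 = j := by omega
    rw [hj1] at heq'
    have htau : (altList sα sβ j).prod = l.prod * sα := by
      rw [hsα, hsβ, hrel, heq', List.prod_append, List.prod_singleton]
    have hword : R.IsWord {α, β} l := by
      intro g hg
      rcases hmem' g hg with h | h
      · exact ⟨β, hβΔ, by rw [h]; exact R.isRefl_sref β hβ⟩
      · exact ⟨α, hαΔ, by rw [h]; exact R.isRefl_sref α hα⟩
    have hcalc : v * (altList sα sβ j).prod * sα = v * l.prod := by
      rw [htau, ← mul_assoc v l.prod sα, mul_assoc (v * l.prod) sα sα, hsα,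
        R.sref_mul_self α hα, mul_one]
    have hle : R.len {α, β} (v * l.prod) ≤ R.len {α, β} v + l.length :=
      R.len_mul_word_le hΔ hv hword
    rw [hcalc] at hstop
    omega
  by_cases hpeel : R.len {α, β} (v * (if Odd (j+1) then sβ else sα)) < R.len {α, β} v
  · -- PEEL
    have hgfacts : ((if Odd (j+1) then sβ else sα) * (if Odd (j+1) then sβ else sα) = 1)
        ∧ (if Odd (j+1) then sβ else sα) ∈ R.subW {α, β}
        ∧ R.len {α, β} v ≤ R.len {α, β} (v * (if Odd (j+1) then sβ else sα)) + 1 := by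
      by_cases ho : Odd (j+1)
      · simp only [if_pos ho]
        exact ⟨R.sref_mul_self β hβ, R.sref_mem _ hβΔ hβ, R.len_le_len_mul_sref hΔ hv hβΔ⟩
      · simp only [if_neg ho]
        exact ⟨R.sref_mul_self α hα, R.sref_mem _ hαΔ hα, R.len_le_len_mul_sref hΔ hv hαΔ⟩
    set v' := v * (if Odd (j+1) then sβ else sα) with hv'
    have hv'mem : v' ∈ R.subW {α, β} := mul_mem hv hgfacts.2.1
    have hback : v' * (if Odd (j+1) then sβ else sα) = v := by
      rw [hv', mul_assoc, hgfacts.1, mul_one]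
    have hvtau : v' * (altList sα sβ (j+1)).prod = v * (altList sα sβ j).prod := by
      rw [altList_prod_succ, ← mul_assoc, hback]
    have hM' : 2 * R.len {α, β} v' + min (j+1) 1 < M := by
      have h1 := hgfacts.2.2
      omega
    obtain ⟨p, q, hp, hq, heq⟩ := IH (2 * R.len {α, β} v' + min (j+1) 1) hM'
      α β hα hβ hab v' (j+1) hv'mem rfl
      (fun _ => by rw [hback]; exact hpeel)
      (by rw [hvtau]; omega)
      (by rw [hvtau]; exact hstop)
      (by intro m hm2 hfm; have := hbound m hm2 hfm; have := hnem m hm2 hfm; omega)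
    rw [hvtau] at heq
    exact ⟨p, q, hp, hq, heq⟩
  · -- STOP
    push_neg at hpeel
    by_cases hj0 : j = 0
    · subst hj0
      have hstop0 : R.len {α, β} v ≤ R.len {α, β} (v * sα) := by
        have h1 : v * (altList sα sβ 0).prod = v := by
          simp [altList]
        rwa [h1] at hstop
    -- v = 1
      have hv1 : v = 1 := by
        rcases hn : R.len {α, β} v with _ | n
        · exact R.eq_one_of_len_zero hΔ hv hn
        · obtain ⟨γ, hγm, hlast⟩ := R.exists_last_letter hΔ hv hn
          rcases Set.mem_insert_iff.mp hγm with h | h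
          · have hrg : R.sref γ (hΔ hγm) = sα := by subst h; rfl
            rw [hrg] at hlast
            rw [hn] at hstop0
            omega
          · simp only [Set.mem_singleton_iff] at h
            have hrg : R.sref γ (hΔ hγm) = sβ := by subst h; rfl
            rw [hrg] at hlast
            have hodd : Odd (0+1) := by decide
            rw [if_pos hodd] at hpeel
            rw [hn] at hpeel
            omega
      refine ⟨1, 0, by norm_num, le_refl 0, ?_⟩
      rw [hv1]
      show (altList sα sβ 0).prod α = (1:ℝ) • α + (0:ℝ) • β
      simp [altList]
    · -- j ≥ 1
      have hj1 : 1 ≤ j := by omega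
      have hbothα : R.len {α, β} v ≤ R.len {α, β} (v * sα)
          ∧ R.len {α, β} v ≤ R.len {α, β} (v * sβ) := by
        have hinv' := hinv hj1
        rcases Nat.even_or_odd j with he | ho
        · have h1 : ¬ Odd j := by rw [← Nat.not_even_iff_odd]; exact not_not_intro he
          have h2 : Odd (j+1) := by rw [← Nat.not_even_iff_odd, Nat.even_add_one]; exact not_not_intro he
          rw [if_neg h1] at hinv'
          rw [if_pos h2] at hpeel
          exact ⟨le_of_lt hinv', hpeel⟩
        · have h1 : Odd j := ho
          have h2 : ¬ Odd (j+1) := by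
            rw [← Nat.not_even_iff_odd, not_not, Nat.even_add_one, Nat.not_even_iff_odd]
            exact ho
          rw [if_pos h1] at hinv'
          rw [if_neg h2] at hpeel
          exact ⟨hpeel, le_of_lt hinv'⟩
      have hminj : min j 1 = 1 := by omega
      have htriv : v * (altList sα sβ 0).prod = v := by simp [altList]
      -- recursive call 1 : (α, β, v, 0)
      obtain ⟨p1, q1, hp1, hq1, he1⟩ := IH (2 * R.len {α, β} v + min 0 1) (by omega)
        α β hα hβ hab v 0 hv rfl (by omega)
        (by rw [htriv]; omega)
        (by rw [htriv]; exact hbothα.1)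
        (by intro m hm2 _; omega)
      rw [htriv] at he1
      -- recursive call 2 : (β, α, v, 0)
      have hcomm : ({β, α} : Set V) = {α, β} := Set.pair_comm β α
      have htriv2 : v * (altList sβ sα 0).prod = v := by simp [altList]
      obtain ⟨p2, q2, hp2, hq2, he2⟩ := IH (2 * R.len {β, α} v + min 0 1)
        (by rw [hcomm]; omega)
        β α hβ hα hab.symm v 0 (by rw [hcomm]; exact hv) rfl (by omega)
        (by rw [hcomm, htriv2]; omega)
        (by rw [hcomm, htriv2]; exact hbothα.2)
        (by intro m hm2 _; omega)
      rw [htriv2] at he2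
      -- assemble
      have happ : (v * (altList sα sβ j).prod) α = v ((altList sα sβ j).prod α) := rfl
      set a := -R.form α β with ha
      have hform : R.form α β = -a := by rw [ha]; ring
      have hba : R.form β α = -a := (R.form_symm β α).trans hform
      have hu1 : 0 ≤ useq a j ∧ 0 ≤ useq a (j+1) := by
        rcases R.pairing α hα β hβ hab with ⟨m, hm2, hfm⟩ | hneg
        · have haeq : a = Real.cos (Real.pi/m) := by rw [ha, hfm]; ring
          have hjm : j ≤ m := hbound m hm2 hfm
          have hjne : j ≠ m := hnem m hm2 hfm
          constructor <;> rw [haeq]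
          · exact useq_cos_nonneg hm2 (by omega)
          · exact useq_cos_nonneg hm2 (by omega)
        · have ha1 : 1 ≤ a := by rw [ha]; linarith
          exact ⟨(useq_ge_one_mono ha1 j).1, (useq_ge_one_mono ha1 (j+1)).1⟩
      rw [happ, tau_alpha R hα hβ a hform hba j]
      set X := if Even j then useq a (j+1) else useq a j with hX
      set Y := if Even j then useq a j else useq a (j+1) with hY
      have hX0 : 0 ≤ X := by rw [hX]; split <;> [exact hu1.2; exact hu1.1]
      have hY0 : 0 ≤ Y := by rw [hY]; split <;> [exact hu1.1; exact hu1.2]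
      refine ⟨X * p1 + Y * q2, X * q1 + Y * p2, ?_, ?_, ?_⟩
      · have := mul_nonneg hX0 hp1
        have := mul_nonneg hY0 hq2
        linarith
      · have := mul_nonneg hX0 hq1
        have := mul_nonneg hY0 hp2
        linarith
      · rw [map_add, map_smul, map_smul, he1, he2]
        module

theorem len_sref_mul_le (R : BasedRootSystem V) {Δ : Set V} (hΔ : Δ ⊆ R.simples)
    {u : V ≃ₗ[ℝ] V} (hu : u ∈ R.subW Δ) {γ : V} (hγΔ : γ ∈ Δ) :
    R.len Δ (R.sref γ (hΔ hγΔ) * u) ≤ R.len Δ u + 1 := by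
  obtain ⟨l, hlen, hl, rfl⟩ := R.exists_min_word hΔ hu
  have hword : R.IsWord Δ (R.sref γ (hΔ hγΔ) :: l) := by
    intro g hg
    rcases List.mem_cons.mp hg with h | h
    · exact ⟨γ, hγΔ, by rw [h]; exact R.isRefl_sref γ (hΔ hγΔ)⟩
    · exact hl g h
  have := R.len_le hword (List.prod_cons (a := R.sref γ (hΔ hγΔ)) (l := l)).symm
  simpa [hlen] using this

theorem mem_nnCone_of_mem {Γ : Set V} {γ : V} (hγ : γ ∈ Γ) : γ ∈ nnCone Γ := by
  refine ⟨{γ}, fun _ => 1, by simpa using hγ, by norm_num, ?_⟩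
  simp

theorem nnCone_smul {Γ : Set V} {x : V} {t : ℝ} (ht : 0 ≤ t) (hx : x ∈ nnCone Γ) :
    t • x ∈ nnCone Γ := by
  obtain ⟨s, c, hs, hc, rfl⟩ := hx
  refine ⟨s, fun v => t * c v, hs, fun v hv => mul_nonneg ht (hc v hv), ?_⟩
  rw [Finset.smul_sum]
  apply Finset.sum_congr rfl
  intro v hv
  rw [smul_smul]

theorem nnCone_add {Γ : Set V} {x y : V} (hx : x ∈ nnCone Γ) (hy : y ∈ nnCone Γ) :
    x + y ∈ nnCone Γ := by
  classical
  obtain ⟨s₁, c₁, hs₁, hc₁, rfl⟩ := hx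
  obtain ⟨s₂, c₂, hs₂, hc₂, rfl⟩ := hy
  refine ⟨s₁ ∪ s₂, fun v => (if v ∈ s₁ then c₁ v else 0) + (if v ∈ s₂ then c₂ v else 0),
    ?_, ?_, ?_⟩
  · intro v hv
    rcases Finset.mem_union.mp (by exact_mod_cast hv) with h | h
    · exact hs₁ h
    · exact hs₂ h
  · intro v _
    apply add_nonneg
    · split
      · exact hc₁ v (by assumption)
      · exact le_refl 0
    · split
      · exact hc₂ v (by assumption)
      · exact le_refl 0
  · symm
    rw [Finset.sum_congr rfl (fun v _ => add_smul (if v ∈ s₁ then c₁ v else 0)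
      (if v ∈ s₂ then c₂ v else 0) v), Finset.sum_add_distrib]
    congr 1
    · rw [Finset.sum_congr rfl (fun v _ => by rw [ite_smul, zero_smul]),
        Finset.sum_ite_mem, Finset.union_inter_cancel_left]
    · rw [Finset.sum_congr rfl (fun v _ => by rw [ite_smul, zero_smul]),
        Finset.sum_ite_mem, Finset.union_inter_cancel_right]

theorem key_lemma (R : BasedRootSystem V) : ∀ N : ℕ, ∀ w : V ≃ₗ[ℝ] V,
    w ∈ R.subW R.simples → R.len R.simples w = N →
    ∀ α, ∀ hα : α ∈ R.simples,
    R.len R.simples w ≤ R.len R.simples (w * R.sref α hα) →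
    w α ∈ nnCone R.simples := by
  intro N
  induction N using Nat.strong_induction_on with
  | _ N IH =>
  intro w hw hN α hα hstop
  have hss : R.simples ⊆ R.simples := Set.Subset.refl _
  rcases N with _ | n
  · rw [R.eq_one_of_len_zero hss hw hN]
    exact mem_nnCone_of_mem hα
  · obtain ⟨β, hβm, hlast⟩ := R.exists_last_letter hss hw hN
    have hβs : β ∈ R.simples := hβm
    have hirr : R.sref β (hss hβm) = R.sref β hβs := rfl
    rw [hirr] at hlast
    -- α ≠ β
    have hαβ : α ≠ β := by
      intro h
      subst h
      have : R.sref α hα = R.sref α hβs := rfl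
      rw [← this] at hlast
      omega
    have hΔ2 : ({α, β} : Set V) ⊆ R.simples := by
      intro x hx
      rcases hx with h | h
      · exact h ▸ hα
      · simp only [Set.mem_singleton_iff] at h; exact h ▸ hβs
    have hαΔ : α ∈ ({α, β} : Set V) := by simp
    have hβΔ : β ∈ ({α, β} : Set V) := by simp
    set sα := R.sref α hα with hsα
    set sβ := R.sref β hβs with hsβ
    have hsβinv : sβ⁻¹ = sβ := inv_eq_of_mul_eq_one_right (R.sref_mul_self β hβs)
    have hβ0 : β ≠ 0 := by
      intro h
      have := R.norm_one β hβs
      rw [h] at this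
      simp at this
    -- the coset condition
    set P : (V ≃ₗ[ℝ] V) → Prop := fun x => x ∈ R.subW R.simples ∧ x⁻¹ * w ∈ R.subW {α, β}
      ∧ R.len R.simples w = R.len R.simples x + R.len {α, β} (x⁻¹ * w) with hP
    have hsβmem2 : sβ ∈ R.subW {α, β} := R.sref_mem _ hβΔ hβs
    have hsαmem2 : sα ∈ R.subW {α, β} := R.sref_mem _ hαΔ hα
    have hsβmem : sβ ∈ R.subW R.simples := R.sref_mem _ hβs hβs
    have hsαmem : sα ∈ R.subW R.simples := R.sref_mem _ hα hα
    have hlen2sβ : R.len {α, β} sβ = 1 := by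
      have hle : R.len {α, β} sβ ≤ 1 := by
        have := R.len_le (Δ := {α, β}) (l := [sβ]) (w := sβ)
          (fun g hg => by
            simp only [List.mem_singleton] at hg
            exact ⟨β, hβΔ, by rw [hg]; exact R.isRefl_sref β hβs⟩)
          (by simp)
        simpa using this
      have hne : R.len {α, β} sβ ≠ 0 := by
        intro h0
        have h1 := R.eq_one_of_len_zero hΔ2 hsβmem2 h0
        have h2 : sβ β = β := by rw [h1]; rfl
        rw [hsβ, sref_apply, R.norm_one β hβs] at h2
        have h3 : (2:ℝ) • β = 0 := by
          have := sub_eq_self.mp h2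
          rwa [mul_one] at this
        rcases smul_eq_zero.mp h3 with h | h
        · norm_num at h
        · exact hβ0 h
      omega
    have hwsβ : (w * sβ)⁻¹ * w = sβ := by
      rw [mul_inv_rev, hsβinv, mul_assoc, inv_mul_cancel, mul_one]
    have hPwsβ : P (w * sβ) := by
      refine ⟨mul_mem hw hsβmem, by rw [hwsβ]; exact hsβmem2, ?_⟩
      rw [hwsβ, hlen2sβ]
      omega
    set S : Set ℕ := {k | ∃ x, P x ∧ R.len R.simples x = k} with hS
    have hSne : S.Nonempty := ⟨R.len R.simples (w * sβ), w * sβ, hPwsβ, rfl⟩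
    obtain ⟨x, hPx, hxlen⟩ := Nat.sInf_mem hSne
    have hmin : ∀ y, P y → sInf S ≤ R.len R.simples y := fun y hy => Nat.sInf_le ⟨y, hy, rfl⟩
    have hk0 : sInf S ≤ n := by
      have h := Nat.sInf_le (show R.len R.simples (w * sβ) ∈ S from ⟨w * sβ, hPwsβ, rfl⟩)
      omega
    obtain ⟨hxmem, humem, hlensum⟩ := hPx
    set u := x⁻¹ * w with hu
    have hxu : x * u = w := by rw [hu, mul_inv_cancel_left]
    have hxstab : ∀ γ, ∀ hγm : γ ∈ ({α, β} : Set V),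
        R.len R.simples x ≤ R.len R.simples (x * R.sref γ (hΔ2 hγm)) := by
      intro γ hγm
      by_contra hlt
      push_neg at hlt
      set sγ := R.sref γ (hΔ2 hγm) with hsγ
      have hsγinv : sγ⁻¹ = sγ := inv_eq_of_mul_eq_one_right (R.sref_mul_self γ (hΔ2 hγm))
      have hsγmem : sγ ∈ R.subW R.simples := R.sref_mem _ (hΔ2 hγm) (hΔ2 hγm)
      have hsγmem2 : sγ ∈ R.subW {α, β} := R.sref_mem _ hγm (hΔ2 hγm)
      have hxsγ : x * sγ ∈ R.subW R.simples := mul_mem hxmem hsγmem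
      have hval : (x * sγ)⁻¹ * w = sγ * u := by
        rw [mul_inv_rev, hsγinv, mul_assoc, ← hu]
      have hup : sγ * u ∈ R.subW {α, β} := mul_mem hsγmem2 humem
      have h1 : R.len R.simples w ≤ R.len R.simples (x * sγ) + R.len {α, β} (sγ * u) := by
        have hw' : w = (x * sγ) * (sγ * u) := by
          rw [← mul_assoc, mul_assoc x sγ sγ, hsγ, R.sref_mul_self γ (hΔ2 hγm), mul_one, hxu]
        rw [hw']
        exact R.len_mul_le hss hΔ2 hxsγ hup
      have h2 : R.len {α, β} (sγ * u) ≤ R.len {α, β} u + 1 := R.len_sref_mul_le hΔ2 humem hγm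
      have h3 : R.len R.simples x ≤ R.len R.simples (x * sγ) + 1 :=
        R.len_le_len_mul_sref hss hxmem (hΔ2 hγm)
      have hPx' : P (x * sγ) := by
        refine ⟨hxsγ, by rw [hval]; exact hup, ?_⟩
        rw [hval]
        omega
      have hc := hmin _ hPx'
      omega
    have hxlt : R.len R.simples x < R.len R.simples w := by omega
    have hxα : x α ∈ nnCone R.simples :=
      IH (R.len R.simples x) (by omega) x hxmem rfl α hα (hxstab α hαΔ)
    have hxβ : x β ∈ nnCone R.simples :=
      IH (R.len R.simples x) (by omega) x hxmem rfl β hβs (hxstab β hβΔ)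
    have hdih : R.len {α, β} u ≤ R.len {α, β} (u * sα) := by
      have husα : u * sα ∈ R.subW {α, β} := mul_mem humem hsαmem2
      have h1 : R.len R.simples (w * sα) ≤ R.len R.simples x + R.len {α, β} (u * sα) := by
        have h : w * sα = x * (u * sα) := by rw [← mul_assoc, hxu]
        rw [h]
        exact R.len_mul_le hss hΔ2 hxmem husα
      omega
    have htriv : u * (altList sα sβ 0).prod = u := by simp [altList]
    obtain ⟨p, q, hp, hq, heq⟩ := R.dihedralP (2 * R.len {α, β} u + min 0 1)
      α β hα hβs hαβ u 0 humem rfl (by omega)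
      (by rw [htriv]; omega) (by rw [htriv]; exact hdih)
      (by intro m hm2 _; omega)
    rw [htriv] at heq
    have hwα : w α = p • (x α) + q • (x β) := by
      rw [← hxu]
      have h : (x * u) α = x (u α) := rfl
      rw [h, heq, map_add, map_smul, map_smul]
    rw [hwα]
    exact nnCone_add (nnCone_smul hp hxα) (nnCone_smul hq hxβ)

theorem form_inv (R : BasedRootSystem V) {w : V ≃ₗ[ℝ] V} (hw : w ∈ R.subW R.simples) :
    ∀ u v : V, R.form (w u) (w v) = R.form u v := by
  refine Subgroup.closure_induction ?_ ?_ ?_ ?_ hw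
  · rintro g ⟨γ, hγ, hrefl⟩
    intro u v
    rw [R.isRefl_eq_sref hγ hrefl, sref_apply, sref_apply]
    simp only [map_sub, map_smul, LinearMap.sub_apply, LinearMap.smul_apply, smul_eq_mul]
    rw [R.norm_one γ hγ, R.form_symm γ v]
    ring
  · intro u v; rfl
  · intro g h _ _ hg hh u v
    have h1 : (g * h) u = g (h u) := rfl
    have h2 : (g * h) v = g (h v) := rfl
    rw [h1, h2, hg, hh]
  · intro g _ hg u v
    have h1 : ∀ z : V, g (g⁻¹ z) = z := by
      intro z
      have : (g * g⁻¹) z = z := by rw [mul_inv_cancel]; rfl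
      exact this
    have h2 := hg (g⁻¹ u) (g⁻¹ v)
    rw [h1, h1] at h2
    exact h2.symm

theorem K_form_nonpos (R : BasedRootSystem V) {k x : V} (hk : k ∈ R.K)
    (hx : x ∈ nnCone R.simples) : R.form k x ≤ 0 := by
  obtain ⟨s, c, hs, hc, rfl⟩ := hx
  rw [map_sum]
  apply Finset.sum_nonpos
  intro γ hγ
  rw [map_smul, smul_eq_mul]
  exact mul_nonpos_of_nonneg_of_nonpos (hc γ hγ) (hk.2 γ (hs hγ))

theorem main_ind (R : BasedRootSystem V) : ∀ N : ℕ, ∀ w : V ≃ₗ[ℝ] V,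
    w ∈ R.subW R.simples → R.len R.simples w = N →
    ∀ k ∈ R.K, ∀ k' ∈ R.K, R.form k (w k') ≤ 0 := by
  intro N
  induction N using Nat.strong_induction_on with
  | _ N IH =>
  intro w hw hN k hk k' hk'
  have hss : R.simples ⊆ R.simples := Set.Subset.refl _
  rcases N with _ | n
  · rw [R.eq_one_of_len_zero hss hw hN]
    exact R.K_form_nonpos hk hk'.1
  · obtain ⟨β, hβm, hlast⟩ := R.exists_last_letter hss hw hN
    have hβs : β ∈ R.simples := hβm
    set sβ := R.sref β hβs with hsβ
    set v := w * sβ with hv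
    have hvmem : v ∈ R.subW R.simples := mul_mem hw (R.sref_mem _ hβs hβs)
    have hvw : v * sβ = w := by
      rw [hv, mul_assoc, R.sref_mul_self β hβs, mul_one]
    -- key lemma : v β ∈ nnCone
    have hvstab : R.len R.simples v ≤ R.len R.simples (v * sβ) := by
      rw [hvw]
      omega
    have hvβ : v β ∈ nnCone R.simples :=
      R.key_lemma (R.len R.simples v) v hvmem rfl β hβs hvstab
    -- decompose
    have happ : w k' = v (sβ k') := by rw [← hvw]; rfl
    have hsk : sβ k' = k' - (2 * R.form k' β) • β := by
      rw [hsβ, sref_apply]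
    have hexp : R.form k (w k') = R.form k (v k') - (2 * R.form k' β) * R.form k (v β) := by
      rw [happ, hsk, map_sub, map_smul, map_sub, map_smul, smul_eq_mul]
    have hA : R.form k (v k') ≤ 0 := IH n (by omega) v hvmem hlast k hk k' hk'
    have hB : R.form k' β ≤ 0 := hk'.2 β hβs
    have hC : R.form k (v β) ≤ 0 := R.K_form_nonpos hk hvβ
    rw [hexp]
    nlinarith

end BasedRootSystem

/-- for `z, z'` in the imaginary cone `𝒵`, `⟨z, z'⟩ ≤ 0`. -/
theorem statement11 {V : Type*} [AddCommGroup V] [Module ℝ V]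
    (R : BasedRootSystem V) (z z' : V)
    (hz : z ∈ R.imaginaryCone) (hz' : z' ∈ R.imaginaryCone) :
    R.form z z' ≤ 0 := by
  obtain ⟨w, hw, k, hk, rfl⟩ := hz
  obtain ⟨w', hw', k', hk', rfl⟩ := hz'
  have hwW : w ∈ R.subW R.simples := hw
  have hw'W : w' ∈ R.subW R.simples := hw'
  have hinv : w⁻¹ ∈ R.subW R.simples := inv_mem hwW
  have h1 : R.form (w k) (w' k') = R.form (w⁻¹ (w k)) (w⁻¹ (w' k')) :=
    (R.form_inv hinv _ _).symm
  have h2 : w⁻¹ (w k) = k := by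
    have h : (w⁻¹ * w) k = k := by rw [inv_mul_cancel]; rfl
    exact h
  have h3 : w⁻¹ (w' k') = (w⁻¹ * w') k' := rfl
  rw [h1, h2, h3]
  exact R.main_ind (R.len R.simples (w⁻¹ * w')) (w⁻¹ * w') (mul_mem hinv hw'W) rfl k hk k' hk'
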